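/- Let H be a center-free group, and let 1 → H → E → G → 1 be an extension such that the induced outer action G → Out(H) is given. Then E is canonically isomorphic to the fiber product of Aut(H) → Out(H) and G → Out(H). -/
import Mathlib


/-- The subgroup of inner automorphisms `Inn(H) = range (MulAut.conj)` is normal in `Aut(H)`. -/
instance innerAut_normal (H : Type*) [Group H] :
    (MulAut.conj (G := H)).range.Normal := by
  constructor
  rintro n ⟨h, rfl⟩ a
  refine ⟨a h, ?_⟩
  ext x
  simp [MulAut.conj_apply, MulAut.mul_apply, map_mul, map_inv, mul_assoc]

/-- The outer automorphism group `Out(H) = Aut(H)/Inn(H)`. -/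
def OutAut (H : Type*) [Group H] : Type _ :=
  MulAut H ⧸ (MulAut.conj (G := H)).range

noncomputable instance (H : Type*) [Group H] : Group (OutAut H) :=
  inferInstanceAs (Group (MulAut H ⧸ (MulAut.conj (G := H)).range))

/-- Let `H` be a center-free group and `1 → H → E → G → 1` an extension
(`i : H → E` injective, `p : E → G` surjective, `im i = ker p`).  Conjugation in `E` induces
`c : E → Aut(H)` (with `i (c e h) = e * i h * e⁻¹`), which descends to the outer action
`φ : G → Out(H)` (i.e. `φ ∘ p = mk ∘ c`).  Then `E` is canonically isomorphic, via
`e ↦ (c e, p e)`, to the fiber product of `Aut(H) → Out(H)` and `φ : G → Out(H)`, namely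
`{(a,g) | a mod Inn(H) = φ g}`. -/
theorem extension_eq_pullback_of_centerfree
    {G H E : Type*} [Group G] [Group H] [Group E]
    (hH : Subgroup.center H = ⊥)
    (i : H →* E) (p : E →* G)
    (hi : Function.Injective i) (hp : Function.Surjective p)
    (hex : i.range = p.ker)
    (c : E →* MulAut H)
    (hc : ∀ (e : E) (h : H), i (c e h) = e * i h * e⁻¹)
    (φ : G →* OutAut H)
    (hφ : ∀ e : E, φ (p e) = (QuotientGroup.mk (c e) : OutAut H)) :
    Function.Injective (fun e : E => ((c e, p e) : MulAut H × G)) ∧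
    Set.range (fun e : E => ((c e, p e) : MulAut H × G)) =
      {x : MulAut H × G | (QuotientGroup.mk x.1 : OutAut H) = φ x.2} := by
  have hconj : ∀ h : H, c (i h) = MulAut.conj h := by
    intro h
    ext h'
    apply hi
    rw [hc]
    simp [← map_mul, ← map_inv]
  constructor
  · intro e₁ e₂ h12
    have hc12 : c e₁ = c e₂ := congrArg Prod.fst h12
    have hp12 : p e₁ = p e₂ := congrArg Prod.snd h12
    have hk : e₂⁻¹ * e₁ ∈ p.ker := by simp [MonoidHom.mem_ker, hp12]
    rw [← hex] at hk
    obtain ⟨h, hh⟩ := hk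
    have hc1 : MulAut.conj h = 1 := by
      rw [← hconj, hh, map_mul, map_inv, hc12]
      simp
    have hcent : h ∈ Subgroup.center H := by
      rw [Subgroup.mem_center_iff]
      intro g
      have h1 := congrArg (fun f : MulAut H => f g) hc1
      simp only [MulAut.conj_apply, MulAut.one_apply] at h1
      calc g * h = h * g * h⁻¹ * h := by rw [h1]
        _ = h * g := by group
    rw [hH, Subgroup.mem_bot] at hcent
    subst hcent
    simp at hh
    rw [eq_comm, inv_mul_eq_one] at hh
    exact hh.symm
  · ext ⟨a, g⟩
    simp only [Set.mem_range, Set.mem_setOf_eq]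
    constructor
    · rintro ⟨e, he⟩
      obtain ⟨h1, h2⟩ := Prod.mk.injEq _ _ _ _ ▸ he
      subst h1; subst h2
      exact (hφ e).symm
    · intro hag
      obtain ⟨e₀, he₀⟩ := hp g
      rw [← he₀, hφ e₀] at hag
      rw [eq_comm, QuotientGroup.eq] at hag
      obtain ⟨h, hh⟩ := hag
      refine ⟨e₀ * i h, ?_⟩
      have : c (e₀ * i h) = a := by
        rw [map_mul, hconj, hh]
        group
      have hpk : p (i h) = 1 := by
        have : i h ∈ p.ker := hex ▸ ⟨h, rfl⟩
        exact this
      simp [this, map_mul, hpk, he₀]
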